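/- For the surface of osculating circles X(s,u), one has det(X_s, X_u, X_uu) = r³τ(1 - cos u) and det(X_s, X_u, X_su) = 2r²τ(1 + r' sin u) sin²(u/2). -/

import Mathlib

open Real

noncomputable section

/-- Euclidean dot product on ℝ³. -/
def dot3 (a b : Fin 3 → ℝ) : ℝ := a 0 * b 0 + a 1 * b 1 + a 2 * b 2

/-- Cross product on ℝ³. -/
def cross3 (a b : Fin 3 → ℝ) : Fin 3 → ℝ :=
  ![a 1 * b 2 - a 2 * b 1, a 2 * b 0 - a 0 * b 2, a 0 * b 1 - a 1 * b 0]

/-- Euclidean norm on ℝ³. -/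
def norm3 (a : Fin 3 → ℝ) : ℝ := Real.sqrt (dot3 a a)

/-- Scalar triple product: determinant of the three vectors. -/
def det3 (a b c : Fin 3 → ℝ) : ℝ := dot3 a (cross3 b c)

/-- Triple product of linear combinations of `T`, `N`, `T × N`. -/
lemma det3_comb (T N : Fin 3 → ℝ) (a1 a2 a3 b1 b2 b3 c1 c2 c3 : ℝ) :
    det3 (a1 • T + a2 • N + a3 • cross3 T N)
         (b1 • T + b2 • N + b3 • cross3 T N)
         (c1 • T + c2 • N + c3 • cross3 T N)
      = (a1 * (b2 * c3 - b3 * c2) - a2 * (b1 * c3 - b3 * c1)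
          + a3 * (b1 * c2 - b2 * c1))
        * (dot3 T T * dot3 N N - dot3 T N ^ 2) := by
  simp only [det3, dot3, cross3, Pi.add_apply, Pi.smul_apply, smul_eq_mul,
    Matrix.cons_val_zero, Matrix.cons_val_one, Matrix.head_cons,
    Matrix.cons_val_two, Matrix.tail_cons]
  ring

/-- Triple-product (determinant) identities for the surface of
osculating circles: `det(X_s, X_u, X_uu)` and `det(X_s, X_u, X_su)`. -/
theorem stmt_9
    (α T N B : ℝ → Fin 3 → ℝ) (κ τ r r' : ℝ → ℝ)
    (hκ : ∀ s, 0 < κ s)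
    (hr : ∀ s, r s = (κ s)⁻¹)
    -- Frenet frame and Frenet equations
    (hTT : ∀ s, dot3 (T s) (T s) = 1)
    (hNN : ∀ s, dot3 (N s) (N s) = 1)
    (hTN : ∀ s, dot3 (T s) (N s) = 0)
    (hB : ∀ s, B s = cross3 (T s) (N s))
    (hα : ∀ s, HasDerivAt α (T s) s)
    (hT : ∀ s, HasDerivAt T (κ s • N s) s)
    (hN : ∀ s, HasDerivAt N ((-κ s) • T s + τ s • B s) s)
    (hB' : ∀ s, HasDerivAt B ((-τ s) • N s) s)
    (hr' : ∀ s, HasDerivAt r (r' s) s)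
    -- the surface of osculating circles and its partial derivatives
    (X Xs Xu : ℝ → ℝ → Fin 3 → ℝ)
    (hX : ∀ s u, X s u = α s + r s • (Real.sin u • T s + (1 - Real.cos u) • N s))
    (hXs : ∀ s u, HasDerivAt (fun t => X t u) (Xs s u) s)
    (hXu : ∀ s u, HasDerivAt (fun w => X s w) (Xu s u) u)
    (Xuu Xsu : ℝ → ℝ → Fin 3 → ℝ)
    (hXuu : ∀ s u, HasDerivAt (fun w => Xu s w) (Xuu s u) u)
    (hXsu : ∀ s u, HasDerivAt (fun w => Xs s w) (Xsu s u) u) :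
    ∀ s u,
      det3 (Xs s u) (Xu s u) (Xuu s u) = (r s) ^ 3 * τ s * (1 - Real.cos u)
      ∧ det3 (Xs s u) (Xu s u) (Xsu s u)
          = 2 * (r s) ^ 2 * τ s * (1 + r' s * Real.sin u) * Real.sin (u / 2) ^ 2 := by
  intro s u
  have hrκ : r s * κ s = 1 := by
    rw [hr]; exact inv_mul_cancel₀ (ne_of_gt (hκ s))
  -- closed form for Xs (for all angles w)
  have keyXs : ∀ w : ℝ, Xs s w =
      (Real.cos w + r' s * Real.sin w) • T s
        + (Real.sin w + r' s * (1 - Real.cos w)) • N s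
        + (r s * τ s * (1 - Real.cos w)) • B s := by
    intro w
    have hinner : HasDerivAt (fun t => Real.sin w • T t + (1 - Real.cos w) • N t)
        (Real.sin w • (κ s • N s) + (1 - Real.cos w) • ((-κ s) • T s + τ s • B s)) s :=
      ((hT s).const_smul (Real.sin w)).add ((hN s).const_smul (1 - Real.cos w))
    have hD : HasDerivAt (fun t => X t w)
        (T s + (r s • (Real.sin w • (κ s • N s) + (1 - Real.cos w) • ((-κ s) • T s + τ s • B s))
          + r' s • (Real.sin w • T s + (1 - Real.cos w) • N s))) s := by
      have := (hα s).add ((hr' s).smul hinner)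
      simp only [hX]
      exact this
    have hu := (hXs s w).unique hD
    rw [hu]
    funext i
    simp only [Pi.add_apply, Pi.smul_apply, smul_eq_mul]
    linear_combination (Real.sin w * N s i - (1 - Real.cos w) * T s i) * hrκ
  -- closed form for Xu (for all angles w)
  have keyXu : ∀ w : ℝ, Xu s w =
      (r s * Real.cos w) • T s + (r s * Real.sin w) • N s + (0 : ℝ) • B s := by
    intro w
    have h1 : HasDerivAt (fun x : ℝ => Real.sin x • T s) (Real.cos w • T s) w :=
      (Real.hasDerivAt_sin w).smul_const (T s)
    have h2 : HasDerivAt (fun x : ℝ => (1 - Real.cos x) • N s) (Real.sin w • N s) w := by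
      have : HasDerivAt (fun x : ℝ => 1 - Real.cos x) (Real.sin w) w := by
        simpa using (Real.hasDerivAt_cos w).const_sub 1
      exact this.smul_const (N s)
    have hD : HasDerivAt (fun x => X s x)
        (r s • (Real.cos w • T s + Real.sin w • N s)) w := by
      have := ((h1.add h2).const_smul (r s)).const_add (α s)
      simp only [hX]
      exact this
    have hu := (hXu s w).unique hD
    rw [hu]
    funext i
    simp only [Pi.add_apply, Pi.smul_apply, smul_eq_mul]
    ring
  -- closed form for Xuu
  have keyXuu : Xuu s u =
      (-(r s * Real.sin u)) • T s + (r s * Real.cos u) • N s + (0 : ℝ) • B s := by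
    have h1 : HasDerivAt (fun x : ℝ => (r s * Real.cos x) • T s)
        ((-(r s * Real.sin u)) • T s) u := by
      have : HasDerivAt (fun x : ℝ => r s * Real.cos x) (-(r s * Real.sin u)) u := by
        simpa [mul_comm, mul_neg] using ((Real.hasDerivAt_cos u).const_mul (r s))
      exact this.smul_const (T s)
    have h2 : HasDerivAt (fun x : ℝ => (r s * Real.sin x) • N s)
        ((r s * Real.cos u) • N s) u := by
      have : HasDerivAt (fun x : ℝ => r s * Real.sin x) (r s * Real.cos u) u := by
        simpa [mul_comm] using ((Real.hasDerivAt_sin u).const_mul (r s))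
      exact this.smul_const (N s)
    have h3 : HasDerivAt (fun _ : ℝ => (0 : ℝ) • B s) ((0 : ℝ) • B s) u := by
      simpa using (hasDerivAt_const u ((0:ℝ) • B s))
    have hD : HasDerivAt (fun w => Xu s w)
        ((-(r s * Real.sin u)) • T s + (r s * Real.cos u) • N s + (0 : ℝ) • B s) u := by
      have := (h1.add h2).add h3
      have heq : (fun w => Xu s w) = fun w =>
          (r s * Real.cos w) • T s + (r s * Real.sin w) • N s + (0 : ℝ) • B s := by
        funext w; exact keyXu w
      rw [heq]
      exact this
    exact (hXuu s u).unique hD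
  -- closed form for Xsu
  have keyXsu : Xsu s u =
      (-Real.sin u + r' s * Real.cos u) • T s
        + (Real.cos u + r' s * Real.sin u) • N s
        + (r s * τ s * Real.sin u) • B s := by
    have h1 : HasDerivAt (fun x : ℝ => (Real.cos x + r' s * Real.sin x) • T s)
        ((-Real.sin u + r' s * Real.cos u) • T s) u := by
      have : HasDerivAt (fun x : ℝ => Real.cos x + r' s * Real.sin x)
          (-Real.sin u + r' s * Real.cos u) u :=
        (Real.hasDerivAt_cos u).add ((Real.hasDerivAt_sin u).const_mul (r' s))
      exact this.smul_const (T s)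
    have h2 : HasDerivAt (fun x : ℝ => (Real.sin x + r' s * (1 - Real.cos x)) • N s)
        ((Real.cos u + r' s * Real.sin u) • N s) u := by
      have : HasDerivAt (fun x : ℝ => Real.sin x + r' s * (1 - Real.cos x))
          (Real.cos u + r' s * Real.sin u) u := by
        have hc : HasDerivAt (fun x : ℝ => r' s * (1 - Real.cos x)) (r' s * Real.sin u) u := by
          have : HasDerivAt (fun x : ℝ => 1 - Real.cos x) (Real.sin u) u := by
            simpa using (Real.hasDerivAt_cos u).const_sub 1
          exact this.const_mul (r' s)
        exact (Real.hasDerivAt_sin u).add hc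
      exact this.smul_const (N s)
    have h3 : HasDerivAt (fun x : ℝ => (r s * τ s * (1 - Real.cos x)) • B s)
        ((r s * τ s * Real.sin u) • B s) u := by
      have : HasDerivAt (fun x : ℝ => r s * τ s * (1 - Real.cos x))
          (r s * τ s * Real.sin u) u := by
        have : HasDerivAt (fun x : ℝ => 1 - Real.cos x) (Real.sin u) u := by
          simpa using (Real.hasDerivAt_cos u).const_sub 1
        exact this.const_mul (r s * τ s)
      exact this.smul_const (B s)
    have hD : HasDerivAt (fun w => Xs s w)
        ((-Real.sin u + r' s * Real.cos u) • T s
          + (Real.cos u + r' s * Real.sin u) • N s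
          + (r s * τ s * Real.sin u) • B s) u := by
      have heq : (fun w => Xs s w) = fun w =>
          (Real.cos w + r' s * Real.sin w) • T s
            + (Real.sin w + r' s * (1 - Real.cos w)) • N s
            + (r s * τ s * (1 - Real.cos w)) • B s := by
        funext w; exact keyXs w
      rw [heq]
      exact (h1.add h2).add h3
    exact (hXsu s u).unique hD
  have hhalf : 2 * Real.sin (u / 2) ^ 2 = 1 - Real.cos u := by
    have := Real.sin_sq_eq_half_sub (u / 2)
    rw [show 2 * (u / 2) = u by ring] at this
    rw [this]; ring
  rw [keyXs u, keyXu u, keyXuu, keyXsu, hB, det3_comb, det3_comb, hTT, hNN, hTN]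
  constructor
  · linear_combination (r s * τ s * (1 - Real.cos u) * r s ^ 2) * Real.sin_sq_add_cos_sq u
  · linear_combination
      (r s ^ 2 * τ s * r' s * Real.sin u + r s ^ 2 * τ s * (1 - Real.cos u))
        * Real.sin_sq_add_cos_sq u
      - (r s ^ 2 * τ s * (1 + r' s * Real.sin u)) * hhalf
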